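/- Variance bound for cross-validation residuals: if Y = f*(X) + ε with ε ~ N(0, σ²) independent of X, and |f(x)| ≤ M, |f*(x)| ≤ M for all x, then for U = -(Y - f(X))² + (Y - f*(X))², one has Var(U) ≤ E[U²] ≤ 4(M² + σ²)·E[(f(X) - f*(X))²]. -/

import Mathlib

open MeasureTheory ProbabilityTheory

open scoped NNReal ENNReal
open MeasureTheory ProbabilityTheory Real Set

lemma aux_comp_neg (f : ℝ → ℝ) : ∫ x, f (-x) = ∫ x, f x := by
  have A : MeasurableEmbedding fun x : ℝ => -x :=
    (Homeomorph.neg ℝ).measurableEmbedding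
  calc ∫ x, f (-x) = ∫ x, f x ∂(Measure.map (fun x : ℝ => -x) volume) :=
        (A.integral_map f).symm
    _ = ∫ x, f x := by rw [Measure.map_neg_eq_self]

lemma gpdf_eq (v : ℝ≥0) :
    gaussianPDFReal 0 v = fun x => (√(2 * π * v))⁻¹ * rexp (-(2 * (v : ℝ))⁻¹ * x ^ 2) := by
  ext x
  rw [gaussianPDFReal]
  congr 2
  ring

lemma gauss_integral_eq {v : ℝ≥0} (hv : v ≠ 0) (g : ℝ → ℝ) :
    ∫ x, g x ∂(gaussianReal 0 v) = ∫ x, gaussianPDFReal 0 v x * g x := by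
  rw [gaussianReal_of_var_ne_zero 0 hv, gaussianPDF_def]
  have h : ∀ x : ℝ, ENNReal.ofReal (gaussianPDFReal 0 v x) =
      ((Real.toNNReal (gaussianPDFReal 0 v x) : ℝ≥0) : ℝ≥0∞) := fun x => rfl
  simp_rw [h]
  rw [integral_withDensity_eq_integral_smul
      ((measurable_gaussianPDFReal 0 v).real_toNNReal) g]
  congr 1
  ext x
  rw [NNReal.smul_def, smul_eq_mul, Real.coe_toNNReal _ (gaussianPDFReal_nonneg 0 v x)]

lemma gauss_integrable_iff {v : ℝ≥0} (hv : v ≠ 0) (g : ℝ → ℝ) :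
    Integrable g (gaussianReal 0 v) ↔
      Integrable (fun x => gaussianPDFReal 0 v x * g x) volume := by
  rw [gaussianReal_of_var_ne_zero 0 hv, gaussianPDF_def]
  have h : ∀ x : ℝ, ENNReal.ofReal (gaussianPDFReal 0 v x) =
      ((Real.toNNReal (gaussianPDFReal 0 v x) : ℝ≥0) : ℝ≥0∞) := fun x => rfl
  simp_rw [h]
  rw [integrable_withDensity_iff_integrable_smul
      ((measurable_gaussianPDFReal 0 v).real_toNNReal)]
  constructor <;> intro hI <;> refine hI.congr (Filter.Eventually.of_forall fun x => ?_) <;>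
    simp only [NNReal.smul_def, smul_eq_mul,
      Real.coe_toNNReal _ (gaussianPDFReal_nonneg 0 v x)]

lemma gauss_integrable_id (v : ℝ≥0) : Integrable (fun x : ℝ => x) (gaussianReal 0 v) := by
  by_cases hv : v = 0
  · subst hv
    rw [gaussianReal_zero_var]
    refine (integrable_const (0 : ℝ)).congr ?_
    rw [ae_dirac_eq]
    exact Filter.eventually_pure.2 rfl
  · rw [gauss_integrable_iff hv, gpdf_eq]
    have hv' : 0 < (v : ℝ) := lt_of_le_of_ne (v.coe_nonneg) (by exact_mod_cast (Ne.symm hv))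
    have hb : 0 < ((2 : ℝ) * v)⁻¹ := by positivity
    have h := (integrable_mul_exp_neg_mul_sq hb).const_mul (√(2 * π * v))⁻¹
    refine h.congr (Filter.Eventually.of_forall fun x => ?_)
    ring

lemma gauss_integrable_sq (v : ℝ≥0) : Integrable (fun x : ℝ => x ^ 2) (gaussianReal 0 v) := by
  by_cases hv : v = 0
  · subst hv
    rw [gaussianReal_zero_var]
    refine (integrable_const (0 : ℝ)).congr ?_
    rw [ae_dirac_eq]
    exact Filter.eventually_pure.2 (by norm_num)
  · rw [gauss_integrable_iff hv, gpdf_eq]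
    have hv' : 0 < (v : ℝ) := lt_of_le_of_ne (v.coe_nonneg) (by exact_mod_cast (Ne.symm hv))
    have hb : 0 < ((2 : ℝ) * v)⁻¹ := by positivity
    have h := (integrable_rpow_mul_exp_neg_mul_sq hb (by norm_num : (-1:ℝ) < 2)).const_mul
      (√(2 * π * v))⁻¹
    refine h.congr (Filter.Eventually.of_forall fun x => ?_)
    simp only [Real.rpow_two]
    ring

lemma gauss_integral_id (v : ℝ≥0) : ∫ x, x ∂(gaussianReal 0 v) = 0 := by
  by_cases hv : v = 0
  · subst hv
    rw [gaussianReal_zero_var, integral_dirac]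
  · rw [gauss_integral_eq hv]
    set F : ℝ → ℝ := fun x => gaussianPDFReal 0 v x * x with hF
    have hodd : ∀ x, F (-x) = -F x := by
      intro x
      simp only [hF, gpdf_eq, neg_sq]
      ring
    have h1 : ∫ x, F (-x) = ∫ x, F x := aux_comp_neg F
    have h2 : ∫ x, F (-x) = -∫ x, F x := by
      simp_rw [hodd]
      exact integral_neg F
    have : ∫ x, F x = 0 := by linarith [h1, h2]
    exact this

lemma gauss_integral_sq (v : ℝ≥0) : ∫ x, x ^ 2 ∂(gaussianReal 0 v) = v := by
  by_cases hv : v = 0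
  · subst hv
    rw [gaussianReal_zero_var, integral_dirac]
    norm_num
  · rw [gauss_integral_eq hv]
    have hv' : 0 < (v : ℝ) := lt_of_le_of_ne (v.coe_nonneg) (by exact_mod_cast (Ne.symm hv))
    have h2v : 0 < (2 : ℝ) * v := by positivity
    have hb : 0 < ((2 : ℝ) * v)⁻¹ := by positivity
    set c : ℝ := (√(2 * π * v))⁻¹ with hc
    set b : ℝ := ((2 : ℝ) * v)⁻¹ with hbdef
    set F : ℝ → ℝ := fun x => gaussianPDFReal 0 v x * x ^ 2 with hF
    have heven : ∀ x, F |x| = F x := by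
      intro x
      simp only [hF, gpdf_eq, sq_abs]
    have h1 : ∫ x, F x = 2 * ∫ x in Ioi (0:ℝ), F x := by
      rw [← integral_comp_abs (f := F)]
      simp_rw [heven]
    have h2 : ∫ x in Ioi (0:ℝ), F x
        = c * ∫ x in Ioi (0:ℝ), x ^ (2:ℝ) * rexp (-b * x ^ (2:ℝ)) := by
      rw [← integral_const_mul]
      refine setIntegral_congr_fun measurableSet_Ioi (fun x _ => ?_)
      simp only [hF, gpdf_eq, Real.rpow_two]
      ring
    have h3 : ∫ x in Ioi (0:ℝ), x ^ (2:ℝ) * rexp (-b * x ^ (2:ℝ))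
        = b ^ (-((2:ℝ) + 1) / 2) * (1 / 2) * Real.Gamma (((2:ℝ) + 1) / 2) := by
      exact integral_rpow_mul_exp_neg_mul_rpow (by norm_num) (by norm_num) hb
    have hG : Real.Gamma (((2:ℝ) + 1) / 2) = √π / 2 := by
      rw [show ((2:ℝ) + 1) / 2 = 1/2 + 1 by norm_num,
        Real.Gamma_add_one (by norm_num), Real.Gamma_one_half_eq]
      ring
    have hbpow : b ^ (-((2:ℝ) + 1) / 2) = (2 * (v:ℝ)) * √(2 * v) := by
      rw [hbdef, show (-((2:ℝ) + 1) / 2) = -((3:ℝ)/2) by norm_num,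
        Real.inv_rpow h2v.le, ← Real.rpow_neg h2v.le, neg_neg,
        show (3:ℝ)/2 = 1 + 1/2 by norm_num, Real.rpow_add h2v, Real.rpow_one,
        ← Real.sqrt_eq_rpow]
    have hcval : c = (√π * √(2 * v))⁻¹ := by
      rw [hc, show (2:ℝ) * π * v = π * (2 * v) by ring, Real.sqrt_mul pi_pos.le]
    have hsq : (0:ℝ) < √π := Real.sqrt_pos.2 pi_pos
    have hs2v : (0:ℝ) < √(2 * v) := Real.sqrt_pos.2 h2v
    rw [h1, h2, h3, hG, hbpow, hcval]
    field_simp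

theorem variance_bound_cv {Ω : Type*} [MeasurableSpace Ω]
    (μ : Measure Ω) [IsProbabilityMeasure μ] {d : ℕ}
    (X : Ω → EuclideanSpace ℝ (Fin d)) (e : Ω → ℝ)
    (f fstar : EuclideanSpace ℝ (Fin d) → ℝ) (M : ℝ) (σ2 : NNReal)
    (hX : Measurable X) (he : Measurable e)
    (hf : Measurable f) (hfstar : Measurable fstar)
    (hgauss : Measure.map e μ = gaussianReal 0 σ2)
    (hindep : IndepFun e X μ)
    (hfM : ∀ x, |f x| ≤ M) (hfstarM : ∀ x, |fstar x| ≤ M) :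
    ∀ Y U : Ω → ℝ, (∀ ω, Y ω = fstar (X ω) + e ω) →
      (∀ ω, U ω = -(Y ω - f (X ω))^2 + (Y ω - fstar (X ω))^2) →
      variance U μ ≤ ∫ ω, (U ω)^2 ∂μ ∧
        ∫ ω, (U ω)^2 ∂μ ≤
          4 * (M^2 + (σ2 : ℝ)) * ∫ ω, (f (X ω) - fstar (X ω))^2 ∂μ := by
  intro Y U hY hU
  set G : EuclideanSpace ℝ (Fin d) → ℝ := fun x => f x - fstar x with hG
  have hGm : Measurable G := hf.sub hfstar
  set g : Ω → ℝ := fun ω => G (X ω) with hg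
  have hgm : Measurable g := hGm.comp hX
  have hM0 : 0 ≤ M := le_trans (abs_nonneg _) (hfM 0)
  have hgbd : ∀ ω, |g ω| ≤ 2 * M := by
    intro ω
    calc |g ω| ≤ |f (X ω)| + |fstar (X ω)| := abs_sub _ _
      _ ≤ M + M := add_le_add (hfM _) (hfstarM _)
      _ = 2 * M := by ring
  have hUeq : ∀ ω, U ω = 2 * e ω * g ω - g ω ^ 2 := by
    intro ω
    rw [hU, hY]
    simp only [hg, hG]
    ring
  have hUfun : U = fun ω => 2 * e ω * g ω - g ω ^ 2 := funext hUeq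
  have hUm : Measurable U := by
    rw [hUfun]
    exact (((measurable_const.mul he).mul hgm).sub (hgm.pow_const 2))
  constructor
  · have h := variance_le_expectation_sq (μ := μ) hUm.aestronglyMeasurable
    simpa using h
  -- integrability of e and e^2
  · have he1 : Integrable e μ := by
      have h := gauss_integrable_id σ2
      rw [← hgauss] at h
      exact (integrable_map_measure aestronglyMeasurable_id he.aemeasurable).mp h
    have he2 : Integrable (fun ω => e ω ^ 2) μ := by
      have h := gauss_integrable_sq σ2
      rw [← hgauss] at h
      exact (integrable_map_measure (by fun_prop) he.aemeasurable).mp h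
    have me1 : ∫ ω, e ω ∂μ = 0 := by
      have h := gauss_integral_id σ2
      rw [← hgauss, integral_map he.aemeasurable
        measurable_id'.aestronglyMeasurable] at h
      exact h
    have me2 : ∫ ω, e ω ^ 2 ∂μ = (σ2 : ℝ) := by
      have h := gauss_integral_sq σ2
      rw [← hgauss, integral_map he.aemeasurable (by fun_prop)] at h
      exact h
    -- integrability of powers of g
    have hgk : ∀ k : ℕ, Integrable (fun ω => g ω ^ k) μ := by
      intro k
      refine (integrable_const ((2*M) ^ k)).mono' ((hgm.pow_const k).aestronglyMeasurable)
        (Filter.Eventually.of_forall fun ω => ?_)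
      rw [Real.norm_eq_abs, abs_pow]
      exact pow_le_pow_left₀ (abs_nonneg _) (hgbd ω) k
    -- independence
    have hind2 : IndepFun (fun ω => e ω ^ 2) (fun ω => g ω ^ 2) μ :=
      hindep.comp (measurable_id.pow_const 2) ((hGm.pow_const 2))
    have hind3 : IndepFun e (fun ω => g ω ^ 3) μ :=
      hindep.comp measurable_id (hGm.pow_const 3)
    -- product integrability
    have hI22 : Integrable (fun ω => e ω ^ 2 * g ω ^ 2) μ :=
      hind2.integrable_mul he2 (hgk 2)
    have hI13 : Integrable (fun ω => e ω * g ω ^ 3) μ :=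
      hind3.integrable_mul he1 (hgk 3)
    -- product integrals
    have hP22 : ∫ ω, e ω ^ 2 * g ω ^ 2 ∂μ = (σ2 : ℝ) * ∫ ω, g ω ^ 2 ∂μ := by
      have h := hind2.integral_mul_eq_mul_integral he2.aestronglyMeasurable (hgk 2).aestronglyMeasurable
      simp only [Pi.mul_apply] at h
      rw [h, me2]
    have hP13 : ∫ ω, e ω * g ω ^ 3 ∂μ = 0 := by
      have h := hind3.integral_mul_eq_mul_integral he1.aestronglyMeasurable (hgk 3).aestronglyMeasurable
      simp only [Pi.mul_apply] at h
      rw [h, me1,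
        zero_mul]
    have hU2eq : ∀ ω, (U ω) ^ 2
        = 4 * (e ω ^ 2 * g ω ^ 2) - 4 * (e ω * g ω ^ 3) + g ω ^ 4 := by
      intro ω
      rw [hUeq]
      ring
    have hsplit : ∫ ω, (U ω) ^ 2 ∂μ
        = 4 * ((σ2 : ℝ) * ∫ ω, g ω ^ 2 ∂μ) - 4 * 0 + ∫ ω, g ω ^ 4 ∂μ := by
      rw [← hP22, ← hP13]
      rw [show (∫ ω, (U ω) ^ 2 ∂μ)
          = ∫ ω, 4 * (e ω ^ 2 * g ω ^ 2) - 4 * (e ω * g ω ^ 3) + g ω ^ 4 ∂μ from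
        integral_congr_ae (Filter.Eventually.of_forall hU2eq)]
      have hIsub : Integrable
          (fun ω => 4 * (e ω ^ 2 * g ω ^ 2) - 4 * (e ω * g ω ^ 3)) μ :=
        (hI22.const_mul 4).sub (hI13.const_mul 4)
      rw [integral_add hIsub (hgk 4),
        integral_sub (hI22.const_mul 4) (hI13.const_mul 4),
        integral_const_mul, integral_const_mul]
    have hg4le : ∫ ω, g ω ^ 4 ∂μ ≤ 4 * M ^ 2 * ∫ ω, g ω ^ 2 ∂μ := by
      rw [← integral_const_mul]
      refine integral_mono (hgk 4) ((hgk 2).const_mul _) fun ω => ?_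
      have h1 : g ω ^ 4 = g ω ^ 2 * g ω ^ 2 := by ring
      have h2 : g ω ^ 2 ≤ 4 * M ^ 2 := by
        have := sq_le_sq' (neg_le_of_abs_le (hgbd ω)) (le_of_abs_le (hgbd ω))
        calc g ω ^ 2 ≤ (2 * M) ^ 2 := this
          _ = 4 * M ^ 2 := by ring
      calc g ω ^ 4 = g ω ^ 2 * g ω ^ 2 := h1
        _ ≤ 4 * M ^ 2 * g ω ^ 2 := mul_le_mul_of_nonneg_right h2 (sq_nonneg _)
    have hgpos : 0 ≤ ∫ ω, g ω ^ 2 ∂μ := integral_nonneg fun ω => sq_nonneg _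
    have : ∫ ω, (f (X ω) - fstar (X ω)) ^ 2 ∂μ = ∫ ω, g ω ^ 2 ∂μ := rfl
    rw [this, hsplit]
    nlinarith [hg4le, hgpos]
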